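/- NF-WL is strictly more powerful than 2-WL for any fragmentation scheme that recovers a substructure with more than two nodes: (1) there exist non-isomorphic graphs with different counts of the substructure that 2-WL cannot distinguish but NF-WL can, and (2) since NF is a reversible augmentation, NF-WL distinguishes all pairs that 2-WL distinguishes. -/

import Mathlib

/-- The type of Weisfeiler-Leman colors after `t` iterations, starting from features in `F`.
The injective hash function is modeled by pairing: a color at iteration `t+1` is the pair of
the previous color and the multiset of the previous colors of the neighbors. -/
def WLColor (F : Type*) : ℕ → Type _
  | 0 => F
  | t + 1 => WLColor F t × Multiset (WLColor F t)

/-- The WL coloring of a graph `G` with node features `X` at iteration `t`: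
`c_v^(0) = hash X_v` and `c_v^(t) = hash (c_v^(t-1), {{c_w^(t-1) | w ∈ N(v)}})`,
with the injective hash realized by pairing. -/
def wl {V F : Type*} [Fintype V] (G : SimpleGraph V) [DecidableRel G.Adj] (X : V → F) :
    (t : ℕ) → V → WLColor F t
  | 0 => X
  | t + 1 => fun v => (wl G X t v, (G.neighborFinset v).val.map (wl G X t))


/-- A simple graph built from a boolean relation (symmetrized, loops removed). -/
def boolGraph {α : Type*} (r : α → α → Bool) : SimpleGraph α :=
  SimpleGraph.fromRel fun a b => r a b = true

instance {α : Type*} [DecidableEq α] (r : α → α → Bool) : DecidableRel (boolGraph r).Adj :=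
  fun a b => decidable_of_iff _ (SimpleGraph.fromRel_adj _ a b).symm

/-- A representative of a finite graph structure: a number of nodes and an adjacency matrix. -/
def GraphRep : Type := Σ n : ℕ, Fin n → Fin n → Bool

/-- Two representatives are isomorphic if some equivalence of the vertices preserves
adjacency. -/
def repIso (a b : GraphRep) : Prop :=
  ∃ e : Fin a.1 ≃ Fin b.1, ∀ i j, a.2 i j = b.2 (e i) (e j)

/-- Isomorphism classes of finite graph structures; the `type` of a fragment lives here. -/
def IsoClass : Type := Quot repIso

variable {V F : Type*}

/-- The type of a fragment `f` of a graph `G`: the isomorphism class of the induced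
subgraph `G[f]`. -/
noncomputable def fragType [DecidableEq V] (G : SimpleGraph V) [DecidableRel G.Adj]
    (f : Finset V) : IsoClass :=
  Quot.mk _ ⟨f.card, fun i j => decide (G.Adj (f.equivFin.symm i : V) (f.equivFin.symm j : V))⟩

/-- The node features of `NF(G)`: the original feature concatenated with the multiset of types
of the fragments containing the node. -/
noncomputable def nfX [DecidableEq V] (G : SimpleGraph V) [DecidableRel G.Adj]
    (Fr : Finset (Finset V)) (X : V → F) : V → F × Multiset IsoClass :=
  fun v => (X v, ((Fr.filter fun f => v ∈ f).val.map (fragType G)))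

/-- The relation underlying `FR(G)`: original edges, and each fragment node is adjacent to the
nodes it contains. -/
def frRel [DecidableEq V] (G : SimpleGraph V) [DecidableRel G.Adj] (Fr : Finset (Finset V)) :
    (V ⊕ Fr) → (V ⊕ Fr) → Bool
  | Sum.inl u, Sum.inl v => decide (G.Adj u v)
  | Sum.inl v, Sum.inr f => decide (v ∈ (f : Finset V))
  | Sum.inr f, Sum.inl v => decide (v ∈ (f : Finset V))
  | Sum.inr _, Sum.inr _ => false

/-- The fragment-representation augmented graph `FR(G)`. -/
def FRGraph [DecidableEq V] (G : SimpleGraph V) [DecidableRel G.Adj]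
    (Fr : Finset (Finset V)) : SimpleGraph (V ⊕ Fr) :=
  boolGraph (frRel G Fr)

instance [DecidableEq V] (G : SimpleGraph V) [DecidableRel G.Adj] (Fr : Finset (Finset V)) :
    DecidableRel (FRGraph G Fr).Adj :=
  inferInstanceAs (DecidableRel (boolGraph (frRel G Fr)).Adj)

/-- The relation underlying `HLG(G)`: as `FR(G)`, plus edges between distinct intersecting
fragments. -/
def hlgRel [DecidableEq V] (G : SimpleGraph V) [DecidableRel G.Adj] (Fr : Finset (Finset V)) :
    (V ⊕ Fr) → (V ⊕ Fr) → Bool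
  | Sum.inl u, Sum.inl v => decide (G.Adj u v)
  | Sum.inl v, Sum.inr f => decide (v ∈ (f : Finset V))
  | Sum.inr f, Sum.inl v => decide (v ∈ (f : Finset V))
  | Sum.inr f, Sum.inr k => decide (f ≠ k) && decide (((f : Finset V) ∩ (k : Finset V)).Nonempty)

/-- The higher-level-graph augmentation `HLG(G)`. -/
def HLGGraph [DecidableEq V] (G : SimpleGraph V) [DecidableRel G.Adj]
    (Fr : Finset (Finset V)) : SimpleGraph (V ⊕ Fr) :=
  boolGraph (hlgRel G Fr)

instance [DecidableEq V] (G : SimpleGraph V) [DecidableRel G.Adj] (Fr : Finset (Finset V)) :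
    DecidableRel (HLGGraph G Fr).Adj :=
  inferInstanceAs (DecidableRel (boolGraph (hlgRel G Fr)).Adj)

/-- The node features of `FR(G)` and `HLG(G)`: original features on original vertices, the
fragment's type on fragment nodes. -/
noncomputable def frX [DecidableEq V] (G : SimpleGraph V) [DecidableRel G.Adj]
    (Fr : Finset (Finset V)) (X : V → F) : (V ⊕ Fr) → F ⊕ IsoClass :=
  Sum.elim (fun v => Sum.inl (X v)) (fun f => Sum.inr (fragType G (f : Finset V)))

/-- A fragmentation scheme: for every finite graph, a set of fragments (node subsets). -/
def FragScheme : Type 1 :=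
  (V : Type) → [Fintype V] → [DecidableEq V] → SimpleGraph V → Finset (Finset V)

/-- `f` is the node set of an induced copy of the pattern `S` in `G`. -/
def IsInducedCopy {s : ℕ} (S : SimpleGraph (Fin s)) {V : Type} [DecidableEq V]
    (G : SimpleGraph V) (f : Finset V) : Prop :=
  ∃ g : Fin s → V, Function.Injective g ∧ Finset.univ.image g = f ∧
    ∀ i j, S.Adj i j ↔ G.Adj (g i) (g j)

/-- The scheme `𝓕` recovers the substructure `S`: every induced copy of `S` is a fragment. -/
def Recovers {s : ℕ} (𝓕 : FragScheme) (S : SimpleGraph (Fin s)) : Prop :=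
  ∀ (V : Type) [Fintype V] [DecidableEq V] (G : SimpleGraph V) (f : Finset V),
    IsInducedCopy S G f → f ∈ 𝓕 V G

/-! ### Auxiliary material -/

section AuxWL

/-- The common color of every vertex of a `d`-regular graph after `t` WL iterations. -/
def regColor (d : ℕ) : (t : ℕ) → WLColor Unit t
  | 0 => ()
  | t + 1 => ((regColor d t, Multiset.replicate d (regColor d t)) : WLColor Unit t × Multiset (WLColor Unit t))

lemma wl_of_regular {V : Type*} [Fintype V] (G : SimpleGraph V) [DecidableRel G.Adj]
    (X : V → Unit) {d : ℕ} (h : ∀ v, G.degree v = d) : ∀ (t : ℕ) (v : V),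
    wl G X t v = regColor d t := by
  intro t
  induction t with
  | zero => intro v; rfl
  | succ t ih =>
    intro v
    show ((wl G X t v, (G.neighborFinset v).val.map (wl G X t)) :
      WLColor Unit t × Multiset (WLColor Unit t)) = regColor d (t + 1)
    rw [regColor]
    refine Prod.ext (ih v) ?_
    show (G.neighborFinset v).val.map (wl G X t) = _
    rw [Multiset.map_congr rfl (fun x _ => ih x), Multiset.map_const']
    have : Multiset.card (G.neighborFinset v).val = d := h v
    rw [this]

lemma univ_wl_of_regular {V : Type*} [Fintype V] (G : SimpleGraph V) [DecidableRel G.Adj]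
    (X : V → Unit) {d : ℕ} (h : ∀ v, G.degree v = d) (t : ℕ) :
    Finset.univ.val.map (wl G X t) =
      Multiset.replicate (Fintype.card V) (regColor d t) := by
  rw [Multiset.map_congr rfl (fun v _ => wl_of_regular G X h t v), Multiset.map_const']
  congr 1

/-- Projection from NF-WL colors to plain WL colors. -/
def wlProj : (t : ℕ) → WLColor (Unit × Multiset IsoClass) t → WLColor Unit t
  | 0, _ => ()
  | t + 1, c =>
    ((wlProj t (c : WLColor (Unit × Multiset IsoClass) t ×
        Multiset (WLColor (Unit × Multiset IsoClass) t)).1,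
      Multiset.map (wlProj t) (c : WLColor (Unit × Multiset IsoClass) t ×
        Multiset (WLColor (Unit × Multiset IsoClass) t)).2) :
      WLColor Unit t × Multiset (WLColor Unit t))

lemma wlProj_wl {V : Type*} [Fintype V] (G : SimpleGraph V) [DecidableRel G.Adj]
    (X : V → Unit) (X' : V → Unit × Multiset IsoClass) : ∀ (t : ℕ) (v : V),
    wlProj t (wl G X' t v) = wl G X t v := by
  intro t
  induction t with
  | zero => intro v; rfl
  | succ t ih =>
    intro v
    show ((wlProj t (wl G X' t v), ((G.neighborFinset v).val.map (wl G X' t)).map (wlProj t)) :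
      WLColor Unit t × Multiset (WLColor Unit t)) =
      ((wl G X t v, (G.neighborFinset v).val.map (wl G X t)) :
      WLColor Unit t × Multiset (WLColor Unit t))
    rw [Multiset.map_map]
    exact Prod.ext (ih v) (Multiset.map_congr rfl (fun x _ => ih x))

end AuxWL

section AuxIso

/-- `repIso` is an equivalence relation. -/
lemma repIso_equivalence : Equivalence repIso := by
  constructor
  · intro a; exact ⟨Equiv.refl _, fun i j => rfl⟩
  · rintro a b ⟨e, he⟩
    refine ⟨e.symm, fun i j => ?_⟩
    have := he (e.symm i) (e.symm j)
    simpa using this.symm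
  · rintro a b c ⟨e₁, h₁⟩ ⟨e₂, h₂⟩
    exact ⟨e₁.trans e₂, fun i j => (h₁ i j).trans (h₂ _ _)⟩

lemma repIso_quot_eq_iff (a b : GraphRep) :
    (Quot.mk repIso a : IsoClass) = Quot.mk repIso b ↔ repIso a b := by
  rw [Quot.eq]
  exact repIso_equivalence.eqvGen_iff

open scoped Classical in
/-- The isomorphism class of the pattern `S` itself. -/
noncomputable def sClass {s : ℕ} (S : SimpleGraph (Fin s)) : IsoClass :=
  Quot.mk repIso ⟨s, fun i j => decide (S.Adj i j)⟩

lemma isInducedCopy_card {s : ℕ} {S : SimpleGraph (Fin s)} {V : Type} [DecidableEq V]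
    {G : SimpleGraph V} {f : Finset V} (h : IsInducedCopy S G f) : f.card = s := by
  obtain ⟨g, hinj, himg, -⟩ := h
  rw [← himg, Finset.card_image_of_injective _ hinj, Finset.card_univ, Fintype.card_fin]

lemma fragType_eq_iff {s : ℕ} (S : SimpleGraph (Fin s)) {V : Type} [DecidableEq V]
    (G : SimpleGraph V) [DecidableRel G.Adj] (f : Finset V) :
    fragType G f = sClass S ↔ IsInducedCopy S G f := by
  classical
  rw [fragType, sClass]
  refine (repIso_quot_eq_iff _ _).trans ?_
  constructor
  · rintro ⟨e, he⟩
    refine ⟨fun i => (f.equivFin.symm (e.symm i) : V), ?_, ?_, ?_⟩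
    · intro i j hij
      have h1 : f.equivFin.symm (e.symm i) = f.equivFin.symm (e.symm j) :=
        Subtype.ext hij
      have h2 := f.equivFin.symm.injective h1
      exact e.symm.injective h2
    · ext x
      simp only [Finset.mem_image, Finset.mem_univ, true_and]
      constructor
      · rintro ⟨i, rfl⟩; exact (f.equivFin.symm (e.symm i)).2
      · intro hx
        refine ⟨e (f.equivFin ⟨x, hx⟩), ?_⟩
        simp
    · intro i j
      have := he (e.symm i) (e.symm j)
      simp only [Equiv.apply_symm_apply] at this
      have h2 := congrArg (fun b => b = true) this
      simp only [decide_eq_true_eq] at h2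
      exact (Iff.of_eq h2).symm
  · rintro ⟨g, hinj, himg, hadj⟩
    have hg : ∀ i, g i ∈ f := fun i => by
      rw [← himg]; exact Finset.mem_image_of_mem _ (Finset.mem_univ i)
    let g' : Fin s → {x // x ∈ f} := fun i => ⟨g i, hg i⟩
    have hbij : Function.Bijective g' := by
      constructor
      · intro i j h; exact hinj (congrArg Subtype.val h)
      · intro x
        have hx : (x : V) ∈ Finset.image g Finset.univ := by rw [himg]; exact x.2
        obtain ⟨i, -, hi⟩ := Finset.mem_image.mp hx
        exact ⟨i, Subtype.ext hi⟩
    refine ⟨f.equivFin.symm.trans (Equiv.ofBijective g' hbij).symm, fun i j => ?_⟩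
    have key : ∀ k : Fin f.card,
        g ((Equiv.ofBijective g' hbij).symm (f.equivFin.symm k)) = (f.equivFin.symm k : V) :=
      fun k => congrArg Subtype.val ((Equiv.ofBijective g' hbij).apply_symm_apply _)
    show decide (G.Adj _ _) = decide (S.Adj _ _)
    simp only [Equiv.trans_apply]
    exact decide_eq_decide.mpr (by rw [hadj, key, key])

lemma isInducedCopy_compl {s : ℕ} (S : SimpleGraph (Fin s)) {V : Type} [DecidableEq V]
    (G : SimpleGraph V) (f : Finset V) :
    IsInducedCopy S G f → IsInducedCopy Sᶜ Gᶜ f := by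
  rintro ⟨g, hinj, himg, hadj⟩
  refine ⟨g, hinj, himg, fun i j => ?_⟩
  rw [SimpleGraph.compl_adj, SimpleGraph.compl_adj, hadj]
  constructor
  · rintro ⟨hne, hna⟩; exact ⟨fun h => hne (hinj h), hna⟩
  · rintro ⟨hne, hna⟩; exact ⟨fun h => hne (congrArg g h), hna⟩

lemma isInducedCopy_compl_iff {s : ℕ} (S : SimpleGraph (Fin s)) {V : Type} [DecidableEq V]
    (G : SimpleGraph V) (f : Finset V) :
    IsInducedCopy Sᶜ Gᶜ f ↔ IsInducedCopy S G f := by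
  constructor
  · intro h
    have := isInducedCopy_compl Sᶜ Gᶜ f h
    rwa [compl_compl, compl_compl] at this
  · exact isInducedCopy_compl S G f

end AuxIso

section AuxCount

open Finset

open scoped Classical in
/-- The total count of `S`-typed fragments seen by all vertices equals `s` times the number
of induced copies of `S`. -/
lemma nf_measure {s : ℕ} (S : SimpleGraph (Fin s)) {V : Type} [Fintype V] [DecidableEq V]
    (G : SimpleGraph V) [DecidableRel G.Adj] (Fr : Finset (Finset V))
    (hFr : ∀ f : Finset V, IsInducedCopy S G f → f ∈ Fr) (X : V → Unit) :
    ((Finset.univ.val.map (nfX G Fr X)).map (fun p => p.2.count (sClass S))).sum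
      = s * (Finset.univ.filter fun f : Finset V => IsInducedCopy S G f).card := by
  classical
  rw [Multiset.map_map]
  have step1 : ∀ v : V,
      ((fun p : Unit × Multiset IsoClass => p.2.count (sClass S)) ∘ (nfX G Fr X)) v
        = ((Fr.filter fun f => v ∈ f).filter fun f => sClass S = fragType G f).card := by
    intro v
    show ((Fr.filter fun f => v ∈ f).val.map (fragType G)).count (sClass S) = _
    rw [Multiset.count_map]
    rfl
  rw [Multiset.map_congr rfl (fun v _ => step1 v)]
  have step2 : (Finset.univ.val.map (fun v : V =>
      ((Fr.filter fun f => v ∈ f).filter fun f => sClass S = fragType G f).card)).sum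
      = ∑ v : V, ((Fr.filter fun f => v ∈ f).filter fun f => sClass S = fragType G f).card :=
    rfl
  rw [step2]
  have step3 : ∀ v : V, ((Fr.filter fun f => v ∈ f).filter fun f => sClass S = fragType G f)
      = Fr.filter fun f => (v ∈ f ∧ sClass S = fragType G f) := by
    intro v; rw [Finset.filter_filter]
  simp only [step3]
  have step4 : ∀ v : V, (Fr.filter fun f => (v ∈ f ∧ sClass S = fragType G f)).card
      = ∑ f ∈ Fr, (if v ∈ f ∧ sClass S = fragType G f then 1 else 0) := by
    intro v; rw [Finset.card_filter]
  simp only [step4]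
  rw [Finset.sum_comm]
  have step5 : ∀ f ∈ Fr, (∑ v : V, if v ∈ f ∧ sClass S = fragType G f then 1 else 0)
      = if sClass S = fragType G f then f.card else 0 := by
    intro f _
    by_cases hP : sClass S = fragType G f
    · rw [if_pos hP]
      have hv : ∀ v : V, (if v ∈ f ∧ sClass S = fragType G f then 1 else 0)
          = if v ∈ f then 1 else 0 := by
        intro v; by_cases hvf : v ∈ f <;> simp [hvf, hP]
      rw [Finset.sum_congr rfl (fun v _ => hv v), Finset.sum_ite_mem, Finset.univ_inter]
      simp
    · rw [if_neg hP]
      refine Finset.sum_eq_zero fun v _ => ?_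
      simp [hP]
  rw [Finset.sum_congr rfl step5, ← Finset.sum_filter]
  have hset : (Fr.filter fun f => sClass S = fragType G f)
      = Finset.univ.filter fun f : Finset V => IsInducedCopy S G f := by
    ext f
    simp only [Finset.mem_filter, Finset.mem_univ, true_and]
    constructor
    · rintro ⟨-, h⟩; exact (fragType_eq_iff S G f).mp h.symm
    · intro h; exact ⟨hFr f h, ((fragType_eq_iff S G f).mpr h).symm⟩
  rw [hset]
  rw [Finset.sum_congr rfl (fun f hf => isInducedCopy_card
    ((Finset.mem_filter.mp hf).2))]
  rw [Finset.sum_const, smul_eq_mul, mul_comm]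

end AuxCount

section AuxGraphs

open Finset

/-- Disjoint copies (indexed by `ι`) of the graph `B`. -/
def copyGraph (ι : Type) {α : Type} (B : SimpleGraph α) : SimpleGraph (ι × α) where
  Adj p q := p.1 = q.1 ∧ B.Adj p.2 q.2
  symm := by constructor; rintro ⟨u, x⟩ ⟨v, y⟩ ⟨h1, h2⟩; exact ⟨h1.symm, h2.symm⟩
  loopless := by constructor; rintro ⟨u, x⟩ ⟨-, h⟩; exact B.loopless.irrefl x h

/-- Disjoint cliques: the cliques are indexed by the second coordinate. -/
def cellGraph (ι α : Type) : SimpleGraph (ι × α) where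
  Adj p q := p.2 = q.2 ∧ p.1 ≠ q.1
  symm := by constructor; rintro ⟨u, x⟩ ⟨v, y⟩ ⟨h1, h2⟩; exact ⟨h1.symm, Ne.symm h2⟩
  loopless := by constructor; rintro ⟨u, x⟩ ⟨-, h⟩; exact h rfl

/-- The complete bipartite graph `K_{s,s}` on `Fin s × Bool`. -/
def bipGraph (s : ℕ) : SimpleGraph (Fin s × Bool) where
  Adj p q := p.2 ≠ q.2
  symm := by constructor; rintro ⟨i, a⟩ ⟨j, b⟩ h; exact Ne.symm h
  loopless := by constructor; rintro ⟨i, a⟩ h; exact h rfl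

/-- An `s`-regular graph on `Fin s × Bool` containing `T` as an induced subgraph:
two copies of `T`, with cross edges between twins and between non-adjacent pairs. -/
def HGraph {s : ℕ} (T : SimpleGraph (Fin s)) : SimpleGraph (Fin s × Bool) where
  Adj p q := (p.2 = q.2 ∧ T.Adj p.1 q.1) ∨ (p.2 ≠ q.2 ∧ (p.1 = q.1 ∨ ¬ T.Adj p.1 q.1))
  symm := by
    constructor
    rintro ⟨i, a⟩ ⟨j, b⟩ (⟨h1, h2⟩ | ⟨h1, h2⟩)
    · exact Or.inl ⟨h1.symm, h2.symm⟩
    · refine Or.inr ⟨Ne.symm h1, ?_⟩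
      rcases h2 with h2 | h2
      · exact Or.inl h2.symm
      · exact Or.inr fun h => h2 h.symm
  loopless := by
    constructor
    rintro ⟨i, a⟩ (⟨-, h⟩ | ⟨h, -⟩)
    · exact T.loopless.irrefl i h
    · exact h rfl

/-- Helper: a graph whose neighborhood of `v` is enumerated by an injection from `Fin k`
has degree `k` at `v`. -/
lemma degree_eq_of_enum {V : Type*} [Fintype V] [DecidableEq V] (G : SimpleGraph V)
    [DecidableRel G.Adj] (v : V) {k : ℕ} (φ : Fin k → V) (hinj : Function.Injective φ)
    (hmem : ∀ w, G.Adj v w ↔ ∃ j, φ j = w) : G.degree v = k := by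
  have h : G.neighborFinset v = Finset.univ.image φ := by
    ext w
    simp only [SimpleGraph.mem_neighborFinset, Finset.mem_image, Finset.mem_univ, true_and]
    exact hmem w
  show (G.neighborFinset v).card = k
  rw [h, Finset.card_image_of_injective _ hinj, Finset.card_univ, Fintype.card_fin]

open scoped Classical in
lemma hgraph_adj_iff {s : ℕ} (T : SimpleGraph (Fin s)) (i : Fin s) (a : Bool)
    (j : Fin s) (b : Bool) :
    (HGraph T).Adj (i, a) (j, b) ↔ (if T.Adj i j then a = b ∧ i ≠ j else (a = b → T.Adj i j) ∧ b = !a) := by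
  classical
  show ((a = b ∧ T.Adj i j) ∨ (a ≠ b ∧ (i = j ∨ ¬ T.Adj i j))) ↔ _
  by_cases h : T.Adj i j
  · rw [if_pos h]
    constructor
    · rintro (⟨h1, -⟩ | ⟨h1, (rfl | h2)⟩)
      · exact ⟨h1, fun hij => T.loopless.irrefl i (hij ▸ h)⟩
      · exact absurd h (T.loopless.irrefl i)
      · exact absurd h h2
    · rintro ⟨h1, -⟩; exact Or.inl ⟨h1, h⟩
  · rw [if_neg h]
    constructor
    · rintro (⟨-, h2⟩ | ⟨h1, -⟩)
      · exact absurd h2 h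
      · exact ⟨fun hab => absurd hab h1, by cases a <;> cases b <;> simp_all⟩
    · rintro ⟨h1, rfl⟩
      exact Or.inr ⟨by cases a <;> simp, Or.inr h⟩

lemma hgraph_degree {s : ℕ} (T : SimpleGraph (Fin s)) [DecidableRel (HGraph T).Adj]
    (v : Fin s × Bool) : (HGraph T).degree v = s := by
  classical
  obtain ⟨i, a⟩ := v
  refine degree_eq_of_enum _ _ (fun j => ((j : Fin s), if T.Adj i j then a else !a)) ?_ ?_
  · intro j₁ j₂ h
    exact congrArg Prod.fst h
  · rintro ⟨j, b⟩
    rw [hgraph_adj_iff]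
    constructor
    · intro h
      refine ⟨j, ?_⟩
      show ((j : Fin s), if T.Adj i j then a else !a) = ((j : Fin s), b)
      by_cases hT : T.Adj i j
      · rw [if_pos hT] at h ⊢
        rw [h.1]
      · rw [if_neg hT] at h ⊢
        rw [h.2]
    · rintro ⟨j', hj'⟩
      obtain ⟨rfl, rfl⟩ : j' = j ∧ (if T.Adj i j' then a else !a) = b := by
        constructor
        · exact congrArg Prod.fst hj'
        · exact congrArg Prod.snd hj'
      by_cases hT : T.Adj i j'
      · rw [if_pos hT, if_pos hT]
        exact ⟨rfl, fun hij => T.loopless.irrefl i (hij ▸ hT)⟩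
      · rw [if_neg hT, if_neg hT]
        exact ⟨fun hab => absurd hab (by cases a <;> simp), rfl⟩

lemma copyGraph_degree {ι α : Type} [Fintype ι] [Fintype α] [DecidableEq ι] [DecidableEq α]
    (B : SimpleGraph α) [DecidableRel B.Adj] [DecidableRel (copyGraph ι B).Adj]
    {d : ℕ} (hB : ∀ x, B.degree x = d) (v : ι × α) : (copyGraph ι B).degree v = d := by
  classical
  obtain ⟨u, x⟩ := v
  have h : (copyGraph ι B).neighborFinset (u, x)
      = (B.neighborFinset x).image (fun y => (u, y)) := by
    ext ⟨v', y⟩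
    simp only [SimpleGraph.mem_neighborFinset, Finset.mem_image]
    constructor
    · rintro ⟨h1, h2⟩
      exact ⟨y, h2, by rw [show u = v' from h1]⟩
    · rintro ⟨y', hy', heq⟩
      rw [← heq]
      exact ⟨rfl, hy'⟩
  show ((copyGraph ι B).neighborFinset (u, x)).card = d
  rw [h, Finset.card_image_of_injective _ (fun a b hab => (Prod.ext_iff.mp hab).2)]
  exact hB x

lemma bipGraph_degree {s : ℕ} [DecidableRel (bipGraph s).Adj] (v : Fin s × Bool) :
    (bipGraph s).degree v = s := by
  obtain ⟨i, a⟩ := v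
  refine degree_eq_of_enum _ _ (fun j => ((j : Fin s), !a)) ?_ ?_
  · intro j₁ j₂ h; exact congrArg Prod.fst h
  · rintro ⟨j, b⟩
    show a ≠ b ↔ _
    constructor
    · intro h; exact ⟨j, by cases a <;> cases b <;> simp_all⟩
    · rintro ⟨j', hj'⟩
      have : (!a) = b := congrArg Prod.snd hj'
      cases a <;> cases b <;> simp_all

lemma cellGraph_degree {ι α : Type} [Fintype ι] [Fintype α] [DecidableEq ι] [DecidableEq α]
    [DecidableRel (cellGraph ι α).Adj] (v : ι × α) :
    (cellGraph ι α).degree v = Fintype.card ι - 1 := by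
  classical
  obtain ⟨u, x⟩ := v
  have h : (cellGraph ι α).neighborFinset (u, x)
      = (Finset.univ.erase u).image (fun w => (w, x)) := by
    ext ⟨v', y⟩
    simp only [SimpleGraph.mem_neighborFinset, Finset.mem_image, Finset.mem_erase,
      Finset.mem_univ, and_true]
    constructor
    · rintro ⟨h1, h2⟩
      exact ⟨v', Ne.symm h2, by rw [show x = y from h1]⟩
    · rintro ⟨w, hw, heq⟩
      rw [← heq]
      exact ⟨rfl, Ne.symm hw⟩
  show ((cellGraph ι α).neighborFinset (u, x)).card = Fintype.card ι - 1
  rw [h, Finset.card_image_of_injective _ (fun a b hab => (Prod.ext_iff.mp hab).1),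
    Finset.card_erase_of_mem (Finset.mem_univ u), Finset.card_univ]

/-- `T` contains a triangle. -/
def HasTri {s : ℕ} (T : SimpleGraph (Fin s)) : Prop :=
  ∃ x y z, T.Adj x y ∧ T.Adj x z ∧ T.Adj y z

/-- `T` contains an induced path on three vertices. -/
def HasP3 {s : ℕ} (T : SimpleGraph (Fin s)) : Prop :=
  ∃ x y z, T.Adj x y ∧ T.Adj y z ∧ ¬ T.Adj x z ∧ x ≠ z

lemma triOrP3_total {s : ℕ} (hs : 2 < s) (S : SimpleGraph (Fin s)) :
    (HasTri S ∨ HasP3 S) ∨ (HasTri Sᶜ ∨ HasP3 Sᶜ) := by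
  classical
  set x0 : Fin s := ⟨0, by omega⟩
  set x1 : Fin s := ⟨1, by omega⟩
  set x2 : Fin s := ⟨2, by omega⟩
  have h01 : x0 ≠ x1 := by simp [x0, x1, Fin.ext_iff]
  have h02 : x0 ≠ x2 := by simp [x0, x2, Fin.ext_iff]
  have h12 : x1 ≠ x2 := by simp [x1, x2, Fin.ext_iff]
  by_cases A : S.Adj x0 x1 <;> by_cases B : S.Adj x0 x2 <;> by_cases C : S.Adj x1 x2
  · exact Or.inl (Or.inl ⟨x0, x1, x2, A, B, C⟩)
  · exact Or.inl (Or.inr ⟨x1, x0, x2, A.symm, B, C, h12⟩)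
  · exact Or.inl (Or.inr ⟨x0, x1, x2, A, C, B, h02⟩)
  · -- A, ¬B, ¬C : P3 in the complement through x2
    refine Or.inr (Or.inr ⟨x0, x2, x1, ?_, ?_, ?_, h01⟩)
    · exact (SimpleGraph.compl_adj S x0 x2).mpr ⟨h02, B⟩
    · exact (SimpleGraph.compl_adj S x2 x1).mpr ⟨(Ne.symm h12), fun h => C h.symm⟩
    · rw [SimpleGraph.compl_adj]; push_neg; intro; exact A
  · exact Or.inl (Or.inr ⟨x0, x2, x1, B, C.symm, A, h01⟩)
  · -- ¬A, B, ¬C : P3 in complement x0 - x1 - x2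
    refine Or.inr (Or.inr ⟨x0, x1, x2, ?_, ?_, ?_, h02⟩)
    · exact (SimpleGraph.compl_adj S x0 x1).mpr ⟨h01, A⟩
    · exact (SimpleGraph.compl_adj S x1 x2).mpr ⟨h12, C⟩
    · rw [SimpleGraph.compl_adj]; push_neg; intro; exact B
  · -- ¬A, ¬B, C : P3 in complement x1 - x0 - x2
    refine Or.inr (Or.inr ⟨x1, x0, x2, ?_, ?_, ?_, h12⟩)
    · exact (SimpleGraph.compl_adj S x1 x0).mpr ⟨Ne.symm h01, fun h => A h.symm⟩
    · exact (SimpleGraph.compl_adj S x0 x2).mpr ⟨h02, B⟩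
    · rw [SimpleGraph.compl_adj]; push_neg; intro; exact C
  · refine Or.inr (Or.inl ⟨x0, x1, x2, ?_, ?_, ?_⟩)
    · exact (SimpleGraph.compl_adj S x0 x1).mpr ⟨h01, A⟩
    · exact (SimpleGraph.compl_adj S x0 x2).mpr ⟨h02, B⟩
    · exact (SimpleGraph.compl_adj S x1 x2).mpr ⟨h12, C⟩

/-- The core construction: for any pattern `T` containing a triangle or an induced `P₃`,
there are two `s`-regular graphs on a common vertex set such that the first contains an
induced copy of `T` and the second contains none. -/
lemma core {s : ℕ} (T : SimpleGraph (Fin s)) (h : HasTri T ∨ HasP3 T) :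
    ∃ (G₁ : SimpleGraph (Fin (s + 1) × (Fin s × Bool))) (_ : DecidableRel G₁.Adj)
      (G₂ : SimpleGraph (Fin (s + 1) × (Fin s × Bool))) (_ : DecidableRel G₂.Adj),
      (∀ v, G₁.degree v = s) ∧ (∀ v, G₂.degree v = s) ∧
      (∃ f, IsInducedCopy T G₁ f) ∧ (∀ f, ¬ IsInducedCopy T G₂ f) := by
  classical
  -- the first graph: s+1 copies of `HGraph T`
  refine ⟨copyGraph (Fin (s + 1)) (HGraph T), Classical.decRel _, ?_⟩
  have hd₁ : ∀ v, (copyGraph (Fin (s + 1)) (HGraph T)).degree v = s :=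
    copyGraph_degree _ (hgraph_degree T)
  have hcopy : ∃ f, IsInducedCopy T (copyGraph (Fin (s + 1)) (HGraph T)) f := by
    refine ⟨Finset.univ.image (fun i : Fin s => ((0 : Fin (s + 1)), (i, false))),
      fun i : Fin s => ((0 : Fin (s + 1)), (i, false)), ?_, rfl, ?_⟩
    · intro i j hij
      exact (Prod.ext_iff.mp ((Prod.ext_iff.mp hij).2)).1
    · intro i j
      show T.Adj i j ↔ (0 : Fin (s + 1)) = 0 ∧ (HGraph T).Adj (i, false) (j, false)
      constructor
      · intro hT; exact ⟨rfl, Or.inl ⟨rfl, hT⟩⟩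
      · rintro ⟨-, (⟨-, hT⟩ | ⟨hne, -⟩)⟩
        · exact hT
        · exact absurd rfl hne
  rcases h with htri | hp3
  · -- second graph : s+1 copies of K_{s,s}, which is triangle-free
    refine ⟨copyGraph (Fin (s + 1)) (bipGraph s), Classical.decRel _, hd₁,
      copyGraph_degree _ (fun x => bipGraph_degree x), hcopy, ?_⟩
    rintro f ⟨g, hinj, -, hadj⟩
    obtain ⟨x, y, z, hxy, hxz, hyz⟩ := htri
    have axy := ((hadj x y).mp hxy).2
    have axz := ((hadj x z).mp hxz).2
    have ayz := ((hadj y z).mp hyz).2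
    -- three pairwise distinct booleans: impossible
    have bxy : (g x).2.2 ≠ (g y).2.2 := axy
    have bxz : (g x).2.2 ≠ (g z).2.2 := axz
    have byz : (g y).2.2 ≠ (g z).2.2 := ayz
    cases hgx : (g x).2.2 <;> cases hgy : (g y).2.2 <;> cases hgz : (g z).2.2 <;>
      simp_all
  · -- second graph : 2s cliques of size s+1, which has no induced P₃
    refine ⟨cellGraph (Fin (s + 1)) (Fin s × Bool), Classical.decRel _, hd₁, ?_, hcopy, ?_⟩
    · intro v
      rw [cellGraph_degree v, Fintype.card_fin]
      omega
    · rintro f ⟨g, hinj, -, hadj⟩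
      obtain ⟨x, y, z, hxy, hyz, hxz, hxz'⟩ := hp3
      obtain ⟨e1, -⟩ := (hadj x y).mp hxy
      obtain ⟨e2, -⟩ := (hadj y z).mp hyz
      have hsame : (g x).2 = (g z).2 := e1.trans e2
      have hnot : ¬ (cellGraph (Fin (s + 1)) (Fin s × Bool)).Adj (g x) (g z) :=
        fun h => hxz ((hadj x z).mpr h)
      have hfst : (g x).1 = (g z).1 := by
        by_contra hne
        exact hnot ⟨hsame, hne⟩
      exact hxz' (hinj (Prod.ext hfst hsame))

end AuxGraphs


open scoped Classical in
/-- Packaging of the three conclusions of part 1, given two same-degree regular graphs on a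
common vertex set, one with an induced copy of `S` and one with none. -/
lemma part1_conclude {s : ℕ} (hs0 : 0 < s) (S : SimpleGraph (Fin s)) (𝓕 : FragScheme)
    (hrec : Recovers 𝓕 S) {V : Type} [Fintype V] [DecidableEq V]
    (G₁ : SimpleGraph V) [DecidableRel G₁.Adj] (G₂ : SimpleGraph V) [DecidableRel G₂.Adj]
    (d : ℕ) (hd₁ : ∀ v, G₁.degree v = d) (hd₂ : ∀ v, G₂.degree v = d)
    (hpos : ∃ f, IsInducedCopy S G₁ f) (hzero : ∀ f, ¬ IsInducedCopy S G₂ f) :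
    (Finset.univ.filter fun f : Finset V => IsInducedCopy S G₁ f).card ≠
        (Finset.univ.filter fun f : Finset V => IsInducedCopy S G₂ f).card ∧
      (∀ t : ℕ, (Finset.univ.val.map (wl G₁ (fun _ => ()) t)) =
        (Finset.univ.val.map (wl G₂ (fun _ => ()) t))) ∧
      (∃ t : ℕ, (Finset.univ.val.map (wl G₁ (nfX G₁ (𝓕 V G₁) (fun _ => ())) t)) ≠
          (Finset.univ.val.map (wl G₂ (nfX G₂ (𝓕 V G₂) (fun _ => ())) t))) := by
  have hc₂ : (Finset.univ.filter fun f : Finset V => IsInducedCopy S G₂ f).card = 0 := by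
    rw [Finset.card_eq_zero, Finset.filter_eq_empty_iff]
    intro f _
    exact hzero f
  have hc₁ : (Finset.univ.filter fun f : Finset V => IsInducedCopy S G₁ f).card ≠ 0 := by
    obtain ⟨f, hf⟩ := hpos
    exact Finset.card_ne_zero_of_mem (Finset.mem_filter.mpr ⟨Finset.mem_univ f, hf⟩)
  refine ⟨by rw [hc₂]; exact hc₁, ?_, ?_⟩
  · intro t
    rw [univ_wl_of_regular G₁ _ hd₁ t, univ_wl_of_regular G₂ _ hd₂ t]
  · refine ⟨0, fun hEq => ?_⟩
    have h1 := nf_measure S G₁ (𝓕 V G₁) (fun f hf => hrec V G₁ f hf) (fun _ => ())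
    have h2 := nf_measure S G₂ (𝓕 V G₂) (fun f hf => hrec V G₂ f hf) (fun _ => ())
    have hEq' : (Finset.univ.val.map (nfX G₁ (𝓕 V G₁) (fun _ => ()))) =
        (Finset.univ.val.map (nfX G₂ (𝓕 V G₂) (fun _ => ()))) := hEq
    rw [hEq'] at h1
    rw [h2] at h1
    have hcc := Nat.eq_of_mul_eq_mul_left hs0 h1.symm
    rw [hc₂] at hcc
    exact hc₁ hcc

open scoped Classical in
/-- NF-WL is strictly more powerful than 2-WL (the standard WL test) for any fragmentation
scheme recovering a substructure `S` with more than two nodes: (1) by the result of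
Chen et al. (2020), there exist non-isomorphic graphs with different counts of induced copies
of `S` that WL cannot distinguish but NF-WL can; and (2) since `NF` is a reversible
augmentation, NF-WL distinguishes every pair of graphs that WL distinguishes. -/
theorem nfwl_strictly_more_powerful_than_wl {s : ℕ} (hs : 2 < s) (S : SimpleGraph (Fin s))
    (𝓕 : FragScheme) (hrec : Recovers 𝓕 S) :
    (∃ (V : Type) (_ : Fintype V) (_ : DecidableEq V)
        (G₁ : SimpleGraph V) (_ : DecidableRel G₁.Adj)
        (G₂ : SimpleGraph V) (_ : DecidableRel G₂.Adj) (X₁ X₂ : V → Unit),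
      (Finset.univ.filter fun f : Finset V => IsInducedCopy S G₁ f).card ≠
        (Finset.univ.filter fun f : Finset V => IsInducedCopy S G₂ f).card ∧
      (∀ t : ℕ, (Finset.univ.val.map (wl G₁ X₁ t)) = (Finset.univ.val.map (wl G₂ X₂ t))) ∧
      (∃ t : ℕ, (Finset.univ.val.map (wl G₁ (nfX G₁ (𝓕 V G₁) X₁) t)) ≠
          (Finset.univ.val.map (wl G₂ (nfX G₂ (𝓕 V G₂) X₂) t)))) ∧
    (∀ (V₁ V₂ : Type) [Fintype V₁] [DecidableEq V₁] [Fintype V₂] [DecidableEq V₂]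
      (G₁ : SimpleGraph V₁) [DecidableRel G₁.Adj] (G₂ : SimpleGraph V₂) [DecidableRel G₂.Adj]
      (X₁ : V₁ → Unit) (X₂ : V₂ → Unit),
      (∃ t : ℕ, (Finset.univ.val.map (wl G₁ X₁ t)) ≠ (Finset.univ.val.map (wl G₂ X₂ t))) →
      ∃ t : ℕ, (Finset.univ.val.map (wl G₁ (nfX G₁ (𝓕 V₁ G₁) X₁) t)) ≠
          (Finset.univ.val.map (wl G₂ (nfX G₂ (𝓕 V₂ G₂) X₂) t))) := by
  classical
  have hs0 : 0 < s := by omega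
  constructor
  · -- Part 1
    rcases triOrP3_total hs S with h | h
    · obtain ⟨G₁, i₁, G₂, i₂, hd₁, hd₂, hpos, hzero⟩ := core S h
      exact ⟨Fin (s + 1) × (Fin s × Bool), inferInstance, inferInstance, G₁, i₁, G₂, i₂,
        fun _ => (), fun _ => (),
        part1_conclude hs0 S 𝓕 hrec G₁ G₂ s hd₁ hd₂ hpos hzero⟩
    · obtain ⟨G₁, i₁, G₂, i₂, hd₁, hd₂, hpos, hzero⟩ := core Sᶜ h
      have key : ∀ (G : SimpleGraph (Fin (s + 1) × (Fin s × Bool))) (f : Finset _),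
          IsInducedCopy S Gᶜ f ↔ IsInducedCopy Sᶜ G f := by
        intro G f
        have := isInducedCopy_compl_iff S (Gᶜ) f
        rw [compl_compl] at this
        exact this.symm
      have hd₁' : ∀ v, (G₁ᶜ).degree v = Fintype.card (Fin (s + 1) × (Fin s × Bool)) - 1 - s := by
        intro v
        rw [SimpleGraph.degree_compl, hd₁ v]
      have hd₂' : ∀ v, (G₂ᶜ).degree v = Fintype.card (Fin (s + 1) × (Fin s × Bool)) - 1 - s := by
        intro v
        rw [SimpleGraph.degree_compl, hd₂ v]
      refine ⟨Fin (s + 1) × (Fin s × Bool), inferInstance, inferInstance, G₁ᶜ, inferInstance,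
        G₂ᶜ, inferInstance, fun _ => (), fun _ => (), ?_⟩
      refine part1_conclude hs0 S 𝓕 hrec (G₁ᶜ) (G₂ᶜ)
        (Fintype.card (Fin (s + 1) × (Fin s × Bool)) - 1 - s) hd₁' hd₂' ?_ ?_
      · obtain ⟨f, hf⟩ := hpos
        exact ⟨f, (key G₁ f).mpr hf⟩
      · intro f hf
        exact hzero f ((key G₂ f).mp hf)
  · -- Part 2
    intro V₁ V₂ _ _ _ _ G₁ _ G₂ _ X₁ X₂ h
    obtain ⟨t, ht⟩ := h
    refine ⟨t, fun hnf => ht ?_⟩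
    have e₁ : Finset.univ.val.map (wl G₁ X₁ t) =
        (Finset.univ.val.map (wl G₁ (nfX G₁ (𝓕 V₁ G₁) X₁) t)).map (wlProj t) := by
      rw [Multiset.map_map]
      exact (Multiset.map_congr rfl (fun v _ => wlProj_wl G₁ X₁ (nfX G₁ (𝓕 V₁ G₁) X₁) t v)).symm
    have e₂ : Finset.univ.val.map (wl G₂ X₂ t) =
        (Finset.univ.val.map (wl G₂ (nfX G₂ (𝓕 V₂ G₂) X₂) t)).map (wlProj t) := by
      rw [Multiset.map_map]
      exact (Multiset.map_congr rfl (fun v _ => wlProj_wl G₂ X₂ (nfX G₂ (𝓕 V₂ G₂) X₂) t v)).symm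
    rw [e₁, e₂, hnf]
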